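/- Let F be an algebraically closed field, K ⊆ F a perfect subfield containing all roots of unity of F (i.e., the torsion subgroup μ of Fˣ is contained in Kˣ). Let a₁,…,a_k ∈ Kˣ be such that the images of a₁,…,a_k in Kˣ/μ are ℤ-linearly independent and span a pure subgroup of Kˣ/μ (i.e., the tuple is simple in Kˣ modulo μ). Let n ≥ 1 and suppose α = (α₁,…,α_k) and α' = (α'₁,…,α'_k) are tuples in Fˣ with αᵢⁿ = aᵢ = α'ᵢⁿ for each i. Then α and α' have the same field type over K: there is a ring isomorphism from K(α₁,…,α_k) to K(α'₁,…,α'_k) fixing K pointwise and sending each αᵢ to α'ᵢ. -/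

import Mathlib

/-- The canonical `ℤ`-module structure on (the additive version of) a quotient of a
commutative group, registered to help instance resolution. -/
instance quotIntModule {G : Type*} [CommGroup G] (P : Subgroup G) :
    Module ℤ (Additive (G ⧸ P)) :=
  AddCommGroup.toIntModule _

/-- Tuples `u` and `v` have the same field type over the subfield `K`: there is a ring
isomorphism `K(u) ≃ K(v)` fixing `K` pointwise and sending `u` to `v` coordinatewise. -/
def SameFieldType {Ω : Type*} [Field Ω] (K : Subfield Ω) {k : ℕ} (u v : Fin k → Ω) : Prop :=
  ∃ e : Subfield.closure ((K : Set Ω) ∪ Set.range u) ≃+*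
        Subfield.closure ((K : Set Ω) ∪ Set.range v),
    (∀ x : Subfield.closure ((K : Set Ω) ∪ Set.range u), (x : Ω) ∈ K → ((e x : Ω) = (x : Ω))) ∧
    ∀ j : Fin k, (e ⟨u j, Subfield.subset_closure (Or.inr ⟨j, rfl⟩)⟩ : Ω) = v j

/-- (Kummer-theoretic uniqueness of roots.) Let `K` be a perfect
subfield of an algebraically closed field `F` containing all roots of unity `μ` of `F`,
and let `a₁, …, a_k ∈ Kˣ` be simple modulo `μ`: their images in `Kˣ/μ` are linearly
independent and span a pure subgroup. Then any two tuples of `n`-th roots of the `aᵢ` in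
`Fˣ` have the same field type over `K`. -/


lemma ofMul_prod' {G : Type*} [CommGroup G] {k : ℕ} (s : Finset (Fin k)) (f : Fin k → G) :
    Additive.ofMul (∏ i ∈ s, f i) = ∑ i ∈ s, Additive.ofMul (f i) := by
  classical
  induction s using Finset.cons_induction with
  | empty => simp
  | cons i s hi ih => simp [Finset.prod_cons, Finset.sum_cons, ih, ofMul_mul]

lemma mem_closure_range_pow {G : Type*} [CommGroup G] {k : ℕ} {v : Fin k → G} {x : G}
    (hx : x ∈ Subgroup.closure (Set.range v)) : ∃ c : Fin k → ℤ, x = ∏ i, v i ^ c i := by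
  classical
  induction hx using Subgroup.closure_induction with
  | mem y hy =>
    obtain ⟨j, rfl⟩ := hy
    exact ⟨Pi.single j 1, by simp [Pi.single_apply, Finset.prod_ite_eq', apply_ite]⟩
  | one => exact ⟨0, by simp⟩
  | mul y z _ _ hy hz =>
    obtain ⟨c, rfl⟩ := hy; obtain ⟨d, rfl⟩ := hz
    exact ⟨c + d, by simp [← Finset.prod_mul_distrib, zpow_add]⟩
  | inv y _ hy =>
    obtain ⟨c, rfl⟩ := hy
    exact ⟨-c, by simp [← Finset.prod_inv_distrib, zpow_neg]⟩

lemma key_dvd {G : Type*} [CommGroup G] {k : ℕ} (a : Fin k → G)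
    (hindep : LinearIndependent ℤ fun j : Fin k =>
      Additive.ofMul ((a j : G ⧸ CommGroup.torsion G)))
    (hpure : ∀ (x : G ⧸ CommGroup.torsion G) (m : ℤ), m ≠ 0 →
      x ^ m ∈ Subgroup.closure
        (Set.range fun j : Fin k => ((a j : G ⧸ CommGroup.torsion G))) →
      x ∈ Subgroup.closure
        (Set.range fun j : Fin k => ((a j : G ⧸ CommGroup.torsion G))))
    (n N q : ℕ) (hn : 1 ≤ n) (hnq : n = q * N)
    (b : Fin k → G) (hb : ∀ i, (b i) ^ q = a i)
    (m : Fin k → ℕ) (β : G) (hβ : β ^ N = ∏ i, (b i) ^ (m i)) :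
    ∀ i, (n : ℤ) ∣ (m i : ℤ) := by
  classical
  have hβn : β ^ n = ∏ i, (a i) ^ (m i) := by
    rw [hnq, mul_comm q N, pow_mul, hβ]
    rw [← Finset.prod_pow]
    refine Finset.prod_congr rfl fun i _ => ?_
    rw [← pow_mul, mul_comm (m i) q, pow_mul, hb]
  set π : G →* G ⧸ CommGroup.torsion G := QuotientGroup.mk' _ with hπ
  have hx : (π β) ^ (n : ℤ) ∈ Subgroup.closure
      (Set.range fun j : Fin k => ((a j : G ⧸ CommGroup.torsion G))) := by
    rw [zpow_natCast, ← map_pow, hβn, map_prod]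
    refine Subgroup.prod_mem _ fun i _ => ?_
    rw [map_pow]
    refine pow_mem (Subgroup.subset_closure ?_) _
    exact ⟨i, rfl⟩
  have hmem := hpure (π β) (n : ℤ) (Int.natCast_ne_zero.mpr (by omega)) hx
  obtain ⟨c, hc⟩ := mem_closure_range_pow hmem
  -- π β ^ n two ways
  have h2 : ∏ i, ((a i : G ⧸ CommGroup.torsion G)) ^ ((n : ℤ) * c i - (m i : ℤ)) = 1 := by
    have e1 : (π β) ^ (n : ℤ) = ∏ i, ((a i : G ⧸ CommGroup.torsion G)) ^ ((n : ℤ) * c i) := by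
      rw [hc, ← Finset.prod_zpow]
      refine Finset.prod_congr rfl fun i _ => ?_
      rw [← zpow_mul, mul_comm (c i) (n:ℤ)]
    have e2 : (π β) ^ (n : ℤ) = ∏ i, ((a i : G ⧸ CommGroup.torsion G)) ^ ((m i : ℤ)) := by
      rw [zpow_natCast, ← map_pow, hβn, map_prod]
      refine Finset.prod_congr rfl fun i _ => ?_
      rw [map_pow, zpow_natCast]
      rfl
    calc ∏ i, ((a i : G ⧸ CommGroup.torsion G)) ^ ((n : ℤ) * c i - (m i : ℤ))
        = (∏ i, ((a i : G ⧸ CommGroup.torsion G)) ^ ((n : ℤ) * c i)) *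
          (∏ i, ((a i : G ⧸ CommGroup.torsion G)) ^ ((m i : ℤ)))⁻¹ := by
          rw [← Finset.prod_inv_distrib, ← Finset.prod_mul_distrib]
          exact Finset.prod_congr rfl fun i _ => by rw [zpow_sub]
      _ = 1 := by rw [← e1, ← e2, mul_inv_cancel]
  have hzero : ∀ i, (n : ℤ) * c i - (m i : ℤ) = 0 := by
    have := Fintype.linearIndependent_iff.mp hindep (fun i => (n : ℤ) * c i - (m i : ℤ)) ?_
    · exact this
    · have := congrArg Additive.ofMul h2
      rw [ofMul_prod'] at this
      simpa [ofMul_zpow] using this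
  intro i
  exact ⟨c i, by linarith [hzero i]⟩


lemma char_setup (F : Type*) [Field F] (K : Subfield F) (hKperf : PerfectField ↥K)
    {k : ℕ} (a : Fin k → (↥K)ˣ) (n : ℕ) (hn : 1 ≤ n) :
    ∃ (N q : ℕ) (b : Fin k → (↥K)ˣ), 0 < N ∧ n = q * N ∧ ((N : F) ≠ 0) ∧
      (∀ i, (b i) ^ q = a i) ∧ (∀ x y : F, x ^ q = y ^ q → x = y) := by
  obtain ⟨p, hp⟩ := CharP.exists F
  rcases CharP.char_is_prime_or_zero F p with hprime | hzero
  · haveI := Fact.mk hprime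
    have hn0 : n ≠ 0 := by omega
    set e := n.factorization p with he
    have hmul : p ^ e * (n / p ^ e) = n := Nat.ordProj_mul_ordCompl_eq_self n p
    set N := n / p ^ e with hN
    have hpN : ¬ p ∣ N := Nat.not_dvd_ordCompl hprime hn0
    have hN0 : 0 < N := Nat.ordCompl_pos p hn0
    haveI hKchar : CharP ↥K p := by
      constructor
      intro x
      rw [← CharP.cast_eq_zero_iff F p x]
      constructor
      · intro h
        have h2 := congrArg (K.subtype) h
        push_cast at h2
        simpa using h2
      · intro h
        apply K.subtype.injective
        push_cast
        simpa using h
    haveI : ExpChar ↥K p := ExpChar.prime hprime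
    haveI : ExpChar F p := ExpChar.prime hprime
    haveI := hKperf
    set g : ↥K ≃+* ↥K := (iterateFrobeniusEquiv ↥K p e).symm with hg
    set b : Fin k → (↥K)ˣ := fun i => Units.map g.toMonoidHom (a i) with hb
    refine ⟨N, p ^ e, b, hN0, hmul.symm, ?_, ?_, ?_⟩
    · intro h
      exact hpN ((CharP.cast_eq_zero_iff F p N).mp h)
    · intro i
      apply Units.ext
      have h1 : ((b i : ↥K)) = g ((a i : ↥K)) := rfl
      have h2 : ((b i : ↥K)) ^ (p ^ e) = iterateFrobeniusEquiv ↥K p e (g ((a i : ↥K))) := by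
        rw [h1, iterateFrobeniusEquiv_def]
      rw [show (((b i) ^ (p ^ e) : (↥K)ˣ) : ↥K) = ((b i : ↥K)) ^ (p ^ e) from rfl, h2, hg,
        RingEquiv.apply_symm_apply]
    · intro x y h
      apply (iterateFrobenius F p e).injective
      rw [iterateFrobenius_def, iterateFrobenius_def, h]
  · subst hzero
    haveI : CharZero F := CharP.charP_to_charZero F
    exact ⟨n, 1, a, by omega, (one_mul n).symm, Nat.cast_ne_zero.mpr (by omega),
      fun i => pow_one _, fun x y h => by simpa using h⟩

open IntermediateField Polynomial
set_option synthInstance.maxHeartbeats 1000000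
set_option maxHeartbeats 2000000

theorem exists_aut
    (F : Type*) [Field F] [IsAlgClosed F]
    (K : Subfield F)
    (hroots : ∀ x : F, (∃ n : ℕ, 0 < n ∧ x ^ n = 1) → x ∈ K)
    {k : ℕ} (a : Fin k → Kˣ)
    (n : ℕ) (hn : 1 ≤ n)
    (N q : ℕ) (hN0 : 0 < N) (hnq : n = q * N) (hNF : (N : F) ≠ 0)
    (b : Fin k → Kˣ) (hb : ∀ i, b i ^ q = a i)
    (hinj : ∀ x y : F, x ^ q = y ^ q → x = y)
    (α α' : Fin k → Fˣ)
    (hα : ∀ i, (α i : F) ^ n = ((a i : K) : F))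
    (hα' : ∀ i, (α' i : F) ^ n = ((a i : K) : F))
    (hkey : ∀ (m : Fin k → ℕ) (β : Kˣ), β ^ N = ∏ i, (b i) ^ (m i) → ∀ i, n ∣ m i) :
    ∃ σ : (adjoin K (Set.range fun i => (α i : F))) ≃ₐ[K]
          (adjoin K (Set.range fun i => (α i : F))),
      ∀ i, (σ ⟨(α i : F), subset_adjoin _ _ ⟨i, rfl⟩⟩ : F) = (α' i : F) := by
  classical
  set αF : Fin k → F := fun i => (α i : F) with hαF
  set L := adjoin K (Set.range αF) with hLdef
  have hmemα : ∀ i, αF i ∈ L := fun i => subset_adjoin _ _ ⟨i, rfl⟩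
  set αL : Fin k → L := fun i => ⟨αF i, hmemα i⟩ with hαL
  have hKL : ∀ x : F, x ∈ K → x ∈ L := fun x hx => L.algebraMap_mem ⟨x, hx⟩
  have hζK : ∀ x : F, x ^ N = 1 → x ∈ K := fun x hx => hroots x ⟨N, hN0, hx⟩
  have hα0 : ∀ i, αF i ≠ 0 := fun i => (α i).ne_zero
  have hbF : ∀ i, ((b i : K) : F) ^ q = ((a i : K) : F) := by
    intro i
    have h1 : ((b i) ^ q : Kˣ) = a i := hb i
    have h2 : ((b i : K)) ^ q = (a i : K) := by exact_mod_cast congrArg Units.val h1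
    exact_mod_cast congrArg (Subtype.val) h2
  have hαN : ∀ i, αF i ^ N = ((b i : K) : F) := by
    intro i
    apply hinj
    rw [← pow_mul, mul_comm N q, ← hnq, hα i, hbF i]
  -- integrality & finite dimension
  have hint : ∀ x ∈ Set.range αF, IsIntegral K x := by
    rintro x ⟨i, rfl⟩
    refine ⟨X ^ N - C ((b i : K)), monic_X_pow_sub_C _ (by omega), ?_⟩
    simp only [eval₂_sub, eval₂_pow, eval₂_X, eval₂_C]
    rw [hαN i]
    exact sub_self _
  haveI : Finite (Set.range αF) := Set.finite_range αF
  haveI hFD : FiniteDimensional K L := IntermediateField.finiteDimensional_adjoin hint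
  -- primitive root
  haveI : NeZero N := ⟨by omega⟩
  haveI : NeZero ((N : F)) := ⟨hNF⟩
  obtain ⟨ξ, hξ⟩ := HasEnoughRootsOfUnity.exists_primitiveRoot F N
  have hξK : ξ ∈ K := hζK ξ hξ.pow_eq_one
  have hξL : ξ ∈ L := hKL ξ hξK
  -- Galois
  haveI hGal : IsGalois K L := by
    have hNK : ((N : K)) ≠ 0 := by
      intro h
      apply hNF
      have h2 := congrArg (K.subtype) h
      push_cast at h2
      simpa using h2
    set T : Finset K := Finset.image (fun i => ((b i : K))) Finset.univ with hT
    set f : Polynomial K := ∏ c ∈ T, (X ^ N - C c) with hf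
    have hmono : ∀ c ∈ T, (X ^ N - C c).Monic := fun c _ => monic_X_pow_sub_C _ (by omega)
    have hfm : f.Monic := monic_prod_of_monic _ _ hmono
    have hsep : f.Separable := by
      apply separable_prod'
      · intro c hc c' hc' hne
        have hcc : c' - c ≠ 0 := sub_ne_zero.mpr (Ne.symm hne)
        refine ⟨C ((c' - c)⁻¹), -C ((c' - c)⁻¹), ?_⟩
        have h1 : (C ((c' - c)⁻¹)) * (X ^ N - C c) + (-C ((c' - c)⁻¹)) * (X ^ N - C c')
            = C ((c' - c)⁻¹) * (C c' - C c) := by ring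
        rw [h1, ← C_sub, ← C_mul, inv_mul_cancel₀ hcc, C_1]
      · intro c hc
        obtain ⟨i, -, rfl⟩ := Finset.mem_image.mp hc
        exact separable_X_pow_sub_C _ hNK (Units.ne_zero (b i))
    have hξL' : IsPrimitiveRoot (⟨ξ, hξL⟩ : L) N := by
      have hmap : IsPrimitiveRoot ((algebraMap L F) (⟨ξ, hξL⟩ : L)) N := hξ
      exact hmap.of_map_of_injective (algebraMap L F).injective
    have hroot : ∀ i, (αL i) ^ N = algebraMap K L ((b i : K)) := by
      intro i
      apply Subtype.ext
      push_cast
      exact hαN i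
    have hsplit : (f.map (algebraMap K L)).Splits := by
      rw [hf, Polynomial.map_prod]
      apply Splits.prod
      intro c hc
      obtain ⟨i, -, rfl⟩ := Finset.mem_image.mp hc
      have hmap : (X ^ N - C ((b i : K))).map (algebraMap K L)
          = X ^ N - C (algebraMap K L ((b i : K))) := by
        simp
      rw [hmap]
      exact X_pow_sub_C_splits_of_isPrimitiveRoot hξL' (hroot i)
    have hfne : f ≠ 0 := hfm.ne_zero
    have hTtop : Algebra.adjoin K (f.rootSet L) = ⊤ := by
      have halg : ∀ x ∈ f.rootSet L, IsAlgebraic K x :=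
        fun x _ => (IsIntegral.of_finite K x).isAlgebraic
      rw [← IntermediateField.adjoin_toSubalgebra_of_isAlgebraic halg]
      suffices htop : IntermediateField.adjoin K (f.rootSet L) = ⊤ by
        rw [htop]
        rfl
      rw [eq_top_iff]
      rintro x -
      set T' := IntermediateField.map (IntermediateField.val L)
          (IntermediateField.adjoin K (f.rootSet L)) with hT'
      have hLle : L ≤ T' := by
        conv_lhs => rw [hLdef]
        rw [adjoin_le_iff]
        rintro y ⟨i, rfl⟩
        have hin : (αL i) ∈ IntermediateField.adjoin K (f.rootSet L) := by
          apply IntermediateField.subset_adjoin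
          rw [Polynomial.mem_rootSet]
          refine ⟨hfne, ?_⟩
          rw [hf, map_prod]
          apply Finset.prod_eq_zero (Finset.mem_image.mpr ⟨i, Finset.mem_univ i, rfl⟩)
          rw [map_sub, map_pow, aeval_X, aeval_C, hroot i]
          exact sub_self _
        exact ⟨αL i, hin, rfl⟩
      have hx' : (x : F) ∈ T' := hLle x.2
      obtain ⟨y, hy, hyx⟩ := hx'
      have hxy : y = x := Subtype.ext hyx
      rwa [← hxy]
    haveI hSF : IsSplittingField K L f := ⟨hsplit, hTtop⟩
    exact IsGalois.of_separable_splitting_field hsep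
  -- fixed field
  have hfix : ∀ x : L, (∀ σ : L ≃ₐ[K] L, σ x = x) → (x : F) ∈ K := by
    intro x hx
    have h1 : x ∈ IntermediateField.fixedField (⊤ : Subgroup (L ≃ₐ[K] L)) := fun g => hx g.1
    have hbot : IntermediateField.fixedField (⊤ : Subgroup (↥L ≃ₐ[↥K] ↥L)) = ⊥ :=
      ((IsGalois.tfae (F := ↥K) (E := ↥L)).out 0 1).mp hGal
    rw [hbot] at h1
    obtain ⟨y, hy⟩ := IntermediateField.mem_bot.mp h1
    rw [← hy]
    exact y.2
  -- every aut fixes K-elements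
  have hfixK : ∀ (σ : L ≃ₐ[K] L) (x : L), (x : F) ∈ K → σ x = x := by
    intro σ x hx
    have hxeq : x = algebraMap K L ⟨(x : F), hx⟩ := by
      apply Subtype.ext
      rfl
    rw [hxeq, AlgEquiv.commutes]
  -- quotients are N-th roots of unity
  have hσα0 : ∀ (σ : L ≃ₐ[K] L) i, (σ (αL i) : F) ≠ 0 := by
    intro σ i h
    have h0 : σ (αL i) = 0 := Subtype.ext h
    have := congrArg σ.symm h0
    rw [AlgEquiv.symm_apply_apply, map_zero] at this
    exact hα0 i (congrArg Subtype.val this)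
  have hquotN : ∀ (σ : L ≃ₐ[K] L) i, ((σ (αL i) : F) / αF i) ^ N = 1 := by
    intro σ i
    have h1 : (σ (αL i)) ^ N = algebraMap K L ⟨((b i : K) : F), (b i : K).2⟩ := by
      rw [← map_pow]
      have h2 : (αL i) ^ N = algebraMap K L ⟨((b i : K) : F), (b i : K).2⟩ := by
        apply Subtype.ext
        push_cast
        exact hαN i
      rw [h2, AlgEquiv.commutes]
    have h2 : ((σ (αL i) : F)) ^ N = ((b i : K) : F) := by
      have h3 := congrArg Subtype.val h1
      push_cast at h3
      exact h3
    rw [div_pow, h2, ← hαN i, div_self (pow_ne_zero _ (hα0 i))]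
  have hx0 : ∀ x : F, x ^ N = 1 → x ≠ 0 := by
    intro x hx h0
    rw [h0, zero_pow (by omega : N ≠ 0)] at hx
    exact zero_ne_one hx
  have hmemW : ∀ (σ : L ≃ₐ[K] L) i,
      (Units.mk0 _ (hx0 _ (hquotN σ i))) ∈ rootsOfUnity N F := by
    intro σ i
    rw [mem_rootsOfUnity']
    exact hquotN σ i
  set E0 : (L ≃ₐ[K] L) → (Fin k → (rootsOfUnity N F)) :=
    fun σ i => ⟨Units.mk0 _ (hx0 _ (hquotN σ i)), hmemW σ i⟩ with hE0
  have hE0val : ∀ (σ : L ≃ₐ[K] L) i, (((E0 σ i : Fˣ)) : F) = (σ (αL i) : F) / αF i :=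
    fun σ i => rfl
  have hmulK : ∀ (σ τ : L ≃ₐ[K] L) i,
      ((σ * τ) (αL i) : F) / αF i = ((σ (αL i) : F) / αF i) * ((τ (αL i) : F) / αF i) := by
    intro σ τ i
    have hc : ((τ (αL i) : F) / αF i) ∈ K := hζK _ (hquotN τ i)
    have hcL : (⟨(τ (αL i) : F) / αF i, hKL _ hc⟩ : L) * αL i = τ (αL i) := by
      apply Subtype.ext
      push_cast
      exact div_mul_cancel₀ _ (hα0 i)
    have hmul : (σ * τ) (αL i) = σ (τ (αL i)) := rfl
    rw [hmul, ← hcL, map_mul, hfixK σ _ hc]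
    push_cast
    rw [div_mul_cancel₀ _ (hα0 i)]
    ring
  set E : (L ≃ₐ[K] L) →* (Fin k → (rootsOfUnity N F)) :=
    { toFun := E0
      map_one' := by
        funext i
        apply Subtype.ext
        apply Units.ext
        have h1 : (((E0 1 i : Fˣ)) : F) = αF i / αF i := hE0val 1 i
        rw [div_self (hα0 i)] at h1
        exact h1
      map_mul' := by
        intro σ τ
        funext i
        apply Subtype.ext
        apply Units.ext
        have h1 := hE0val (σ * τ) i
        rw [hmulK σ τ i, ← hE0val σ i, ← hE0val τ i] at h1
        exact h1 } with hE
  have hEval : ∀ (σ : L ≃ₐ[K] L) i, (((E σ i : Fˣ)) : F) = (σ (αL i) : F) / αF i :=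
    fun σ i => rfl
  -- the target tuple d
  have hζn : ∀ i, ((α' i : F) / αF i) ^ n = 1 := by
    intro i
    rw [div_pow, hα' i, ← hα i, div_self (pow_ne_zero _ (hα0 i))]
  have hζN : ∀ i, ((α' i : F) / αF i) ^ N = 1 := by
    intro i
    apply hinj _ 1
    rw [one_pow, ← pow_mul, mul_comm N q, ← hnq, hζn i]
  set d : Fin k → (rootsOfUnity N F) :=
    fun i => ⟨Units.mk0 _ (hx0 _ (hζN i)), by rw [mem_rootsOfUnity']; exact hζN i⟩ with hd
  have hdval : ∀ i, (((d i : Fˣ)) : F) = (α' i : F) / αF i := fun i => rfl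
  have hdmem : d ∈ E.range := by
    by_contra hd
    set Q := (Fin k → (rootsOfUnity N F)) ⧸ E.range with hQ
    have hQd : (QuotientGroup.mk d : Q) ≠ 1 := by
      intro h
      exact hd ((QuotientGroup.eq_one_iff d).mp h)
    have hexpW : ∀ w : Fin k → (rootsOfUnity N F), w ^ N = 1 := by
      intro w
      funext i
      show (w i) ^ N = 1
      apply Subtype.ext
      push_cast
      exact (mem_rootsOfUnity N (w i : Fˣ)).mp (w i).2
    have hexpQ : Monoid.exponent Q ∣ N := by
      apply Monoid.exponent_dvd_of_forall_pow_eq_one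
      intro x
      obtain ⟨w, rfl⟩ := QuotientGroup.mk_surjective x
      rw [← QuotientGroup.mk_pow, hexpW w, QuotientGroup.mk_one]
    haveI hHE : HasEnoughRootsOfUnity F (Monoid.exponent Q) :=
      HasEnoughRootsOfUnity.of_dvd F hexpQ
    obtain ⟨φ, hφ⟩ :=
      CommGroup.exists_apply_ne_one_of_hasEnoughRootsOfUnity (G := Q) (M := F) hQd
    set ψ : (Fin k → (rootsOfUnity N F)) →* Fˣ := φ.comp (QuotientGroup.mk' E.range) with hψ
    have hψH : ∀ τ : L ≃ₐ[K] L, ψ (E τ) = 1 := by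
      intro τ
      have h1 : (QuotientGroup.mk' E.range) (E τ) = 1 := by
        rw [QuotientGroup.mk'_apply, QuotientGroup.eq_one_iff]
        exact ⟨τ, rfl⟩
      rw [hψ, MonoidHom.comp_apply, h1, map_one]
    have hψd : ψ d ≠ 1 := hφ
    set ξR : (rootsOfUnity N F) := hξ.toRootsOfUnity with hξR
    have hξRval : ((ξR : Fˣ) : F) = ξ := hξ.val_toRootsOfUnity_coe
    have hgen : ∀ h : (rootsOfUnity N F), ∃ t : ℕ, ξR ^ t = h := by
      intro h
      have h2 : ((h : Fˣ)) ^ N = 1 := (mem_rootsOfUnity N (h : Fˣ)).mp h.2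
      have hh : (((h : Fˣ)) : F) ^ N = 1 := by
        rw [← Units.val_pow_eq_pow_val, h2, Units.val_one]
      obtain ⟨t, -, ht⟩ := hξ.eq_pow_of_pow_eq_one hh
      refine ⟨t, ?_⟩
      apply Subtype.ext
      apply Units.ext
      push_cast
      rw [hξRval]
      exact ht
    have hθ : ∀ i, ∃ mm : ℕ, ξ ^ mm = ((ψ (Pi.mulSingle i ξR) : Fˣ) : F) := by
      intro i
      have h1 : (ψ (Pi.mulSingle i ξR)) ^ N = 1 := by
        rw [← map_pow, hexpW, map_one]
      have h2 : (((ψ (Pi.mulSingle i ξR)) : Fˣ) : F) ^ N = 1 := by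
        rw [← Units.val_pow_eq_pow_val, h1, Units.val_one]
      obtain ⟨t, -, ht⟩ := hξ.eq_pow_of_pow_eq_one h2
      exact ⟨t, ht⟩
    choose m hm using hθ
    have P1 : ∀ w : Fin k → (rootsOfUnity N F),
        ((ψ w : Fˣ) : F) = ∏ i, (((w i : Fˣ) : F)) ^ m i := by
      intro w
      have hw : w = ∏ i, Pi.mulSingle i (w i) := by
        rw [Finset.univ_prod_mulSingle]
      calc ((ψ w : Fˣ) : F) = ((ψ (∏ i, Pi.mulSingle i (w i)) : Fˣ) : F) := by rw [← hw]
        _ = (((∏ i, ψ (Pi.mulSingle i (w i)) : Fˣ)) : F) := by rw [map_prod]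
        _ = ∏ i, ((ψ (Pi.mulSingle i (w i)) : Fˣ) : F) := by push_cast; rfl
        _ = ∏ i, (((w i : Fˣ) : F)) ^ m i := by
            refine Finset.prod_congr rfl fun i _ => ?_
            obtain ⟨t, ht⟩ := hgen (w i)
            rw [← ht, Pi.mulSingle_pow, map_pow]
            have hl : (((ψ (Pi.mulSingle i ξR)) ^ t : Fˣ) : F) = (ξ ^ (m i)) ^ t := by
              push_cast
              rw [← hm i]
            have hr : (((ξR ^ t : (rootsOfUnity N F)) : Fˣ) : F) = ξ ^ t := by
              push_cast
              rw [hξRval]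
            rw [hl, hr, ← pow_mul, ← pow_mul, mul_comm]
    set βL : L := ∏ i, (αL i) ^ m i with hβL
    have hβval : (βL : F) = ∏ i, (αF i) ^ m i := by
      rw [hβL]
      push_cast
      rfl
    have hβfix : ∀ τ : L ≃ₐ[K] L, τ βL = βL := by
      intro τ
      apply Subtype.ext
      have h1 : (τ βL : F) = ∏ i, ((τ (αL i) : F)) ^ m i := by
        rw [hβL, map_prod]
        simp only [map_pow]
        push_cast
        rfl
      rw [h1]
      have h2 : ∀ i, ((τ (αL i) : F)) = (((E τ i : Fˣ) : F)) * αF i := by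
        intro i
        rw [hEval, div_mul_cancel₀ _ (hα0 i)]
      calc ∏ i, ((τ (αL i) : F)) ^ m i
          = (∏ i, (((E τ i : Fˣ) : F)) ^ m i) * ∏ i, (αF i) ^ m i := by
            rw [← Finset.prod_mul_distrib]
            exact Finset.prod_congr rfl fun i _ => by rw [h2 i, mul_pow]
        _ = 1 * ∏ i, (αF i) ^ m i := by rw [← P1 (E τ), hψH τ, Units.val_one]
        _ = (βL : F) := by rw [one_mul, hβval]
    have hβK : (βL : F) ∈ K := hfix βL hβfix
    have hβ0 : (βL : F) ≠ 0 := by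
      rw [hβval]
      exact Finset.prod_ne_zero_iff.mpr fun i _ => pow_ne_zero _ (hα0 i)
    set βU : Kˣ := Units.mk0 ⟨(βL : F), hβK⟩ (by
      intro h
      exact hβ0 (congrArg Subtype.val h)) with hβU
    have hβN : βU ^ N = ∏ i, (b i) ^ (m i) := by
      apply Units.ext
      apply Subtype.ext
      rw [hβU]
      push_cast [Units.val_mk0]
      rw [hβval, ← Finset.prod_pow]
      refine Finset.prod_congr rfl fun i _ => ?_
      rw [← pow_mul, mul_comm (m i) N, pow_mul, hαN i]
    have hdvd := hkey m βU hβN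
    apply hψd
    apply Units.ext
    have hone : ((ψ d : Fˣ) : F) = 1 := by
      rw [P1 d]
      refine Finset.prod_eq_one fun i _ => ?_
      obtain ⟨c, hc⟩ := hdvd i
      rw [hdval i, hc, pow_mul, hζn i, one_pow]
    rw [hone]
    rfl
  obtain ⟨σ, hσ⟩ := hdmem
  refine ⟨σ, fun i => ?_⟩
  have h2 : (σ (αL i) : F) / αF i = (α' i : F) / αF i := by
    have h1 := congrArg (fun w => (((w i : Fˣ)) : F)) hσ
    rw [show ((E σ : Fin k → (rootsOfUnity N F)) = E0 σ) from rfl] at h1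
    exact h1
  have h3 : (σ (αL i) : F) = (α' i : F) := by
    field_simp [hα0 i] at h2
    exact h2
  exact h3

theorem kummer_roots_same_field_type
    (F : Type*) [Field F] [IsAlgClosed F]
    (K : Subfield F) (hKperf : PerfectField K)
    -- `K` contains all roots of unity of `F`:
    (hroots : ∀ x : F, (∃ n : ℕ, 0 < n ∧ x ^ n = 1) → x ∈ K)
    (k : ℕ) (a : Fin k → Kˣ)
    -- the images of the `aᵢ` in `Kˣ/μ` are `ℤ`-linearly independent:
    (hindep : LinearIndependent ℤ fun j : Fin k =>
      Additive.ofMul ((a j : Kˣ ⧸ CommGroup.torsion Kˣ)))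
    -- and they span a pure subgroup of `Kˣ/μ`:
    (hpure : ∀ (x : Kˣ ⧸ CommGroup.torsion Kˣ) (m : ℤ), m ≠ 0 →
      x ^ m ∈ Subgroup.closure
        (Set.range fun j : Fin k => ((a j : Kˣ ⧸ CommGroup.torsion Kˣ))) →
      x ∈ Subgroup.closure
        (Set.range fun j : Fin k => ((a j : Kˣ ⧸ CommGroup.torsion Kˣ))))
    (n : ℕ) (hn : 1 ≤ n)
    (α α' : Fin k → Fˣ)
    (hα : ∀ i, (α i : F) ^ n = ((a i : K) : F))
    (hα' : ∀ i, (α' i : F) ^ n = ((a i : K) : F)) :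
    SameFieldType K (fun i => (α i : F)) (fun i => (α' i : F)) := by
  classical
  obtain ⟨N, q, b, hN0, hnq, hNF, hb, hinj⟩ := char_setup F K hKperf a n hn
  have hkey : ∀ (m : Fin k → ℕ) (β : (↥K)ˣ), β ^ N = ∏ i, (b i) ^ (m i) → ∀ i, n ∣ m i := by
    intro m β hβ i
    exact_mod_cast key_dvd a hindep hpure n N q hn hnq b hb m β hβ i
  have hα0 : ∀ i, (α i : F) ≠ 0 := fun i => (α i).ne_zero
  have hα'0 : ∀ i, (α' i : F) ≠ 0 := fun i => (α' i).ne_zero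
  have hζn : ∀ i, ((α' i : F) / (α i : F)) ^ n = 1 := by
    intro i
    rw [div_pow, hα' i, ← hα i, div_self (pow_ne_zero _ (hα0 i))]
  have hζK : ∀ i, ((α' i : F) / (α i : F)) ∈ K := fun i => hroots _ ⟨n, by omega, hζn i⟩
  set L := IntermediateField.adjoin ↥K (Set.range fun i => (α i : F)) with hL
  obtain ⟨σ, hσ⟩ := exists_aut F K hroots a n hn N q hN0 hnq hNF b hb hinj α α' hα hα' hkey
  have hrange : Set.range (algebraMap ↥K F) = (K : Set F) := Subtype.range_coe
  have h1 : Subfield.closure ((K : Set F) ∪ Set.range fun i => (α i : F)) = L.toSubfield := by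
    rw [hL, IntermediateField.adjoin_toSubfield, hrange]
  have hmemα : ∀ i, (α i : F) ∈ L := fun i => IntermediateField.subset_adjoin _ _ ⟨i, rfl⟩
  have hKL : ∀ x : F, x ∈ K → x ∈ L := fun x hx => L.algebraMap_mem ⟨x, hx⟩
  have hmemα' : ∀ i, (α' i : F) ∈ L := by
    intro i
    have hx : (α' i : F) = ((α' i : F) / (α i : F)) * (α i : F) :=
      (div_mul_cancel₀ _ (hα0 i)).symm
    rw [hx]
    exact mul_mem (hKL _ (hζK i)) (hmemα i)
  have hL' : IntermediateField.adjoin ↥K (Set.range fun i => (α' i : F)) = L := by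
    apply le_antisymm
    · rw [IntermediateField.adjoin_le_iff]
      rintro x ⟨i, rfl⟩
      exact hmemα' i
    · conv_lhs => rw [hL]
      rw [IntermediateField.adjoin_le_iff]
      rintro x ⟨i, rfl⟩
      show (α i : F) ∈ (IntermediateField.adjoin ↥K (Set.range fun i => (α' i : F)) : Set F)
      have hx : (α i : F) = ((α' i : F) / (α i : F))⁻¹ * (α' i : F) := by
        rw [inv_div, div_mul_cancel₀ _ (hα'0 i)]
      rw [hx]
      exact mul_mem
        ((IntermediateField.adjoin ↥K _).algebraMap_mem ⟨_, K.inv_mem (hζK i)⟩)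
        (IntermediateField.subset_adjoin _ _ ⟨i, rfl⟩)
  have h2 : Subfield.closure ((K : Set F) ∪ Set.range fun i => (α' i : F)) = L.toSubfield := by
    rw [← hL', IntermediateField.adjoin_toSubfield, hrange]
  refine ⟨(RingEquiv.subfieldCongr h1).trans
    ((σ.toRingEquiv : ↥L.toSubfield ≃+* ↥L.toSubfield).trans (RingEquiv.subfieldCongr h2.symm)),
    ?_, ?_⟩
  · intro x hx
    have hxm : (x : F) ∈ L := le_of_eq h1 x.2
    show ((σ ⟨(x : F), hxm⟩ : L) : F) = (x : F)
    have hxeq : (⟨(x : F), hxm⟩ : L) = algebraMap ↥K ↥L ⟨(x : F), hx⟩ := Subtype.ext rfl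
    rw [hxeq, AlgEquiv.commutes]
    rfl
  · intro j
    show ((σ ⟨(α j : F), hmemα j⟩ : L) : F) = (α' j : F)
    exact hσ j
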